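/- Let F be a family of f intervals on the real line such that every point of the line is contained in at most two intervals of F. Then for any budget t, the maximum number of intervals of F that can be intersected (stabbed) by t points equals the value computed by the greedy algorithm that repeatedly, scanning the intervals in left-to-right order of left endpoints, stabs the overlap of two consecutive overlapping not-yet-stabbed intervals while budget and such pairs remain, and then stabs remaining intervals one point each. -/

import Mathlib

open Classical

/-- `p` is a period of the string (list) `P`. -/
def IsPeriodOf {α : Type*} (P : List α) (p : ℕ) : Prop :=
  0 < p ∧ ∀ i, i + p < P.length → P[i]? = P[i + p]?

/-- The smallest period of `P`. -/
noncomputable def minPeriod {α : Type*} (P : List α) : ℕ := sInf {p | IsPeriodOf P p}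

/-- `P` is periodic if its smallest period is at most `|P|/2`. -/
def ListPeriodic {α : Type*} (P : List α) : Prop := 2 * minPeriod P ≤ P.length

/-- `P` occurs in `S` starting at position `i`. -/
def OccursAt {α : Type*} (P S : List α) (i : ℕ) : Prop :=
  i + P.length ≤ S.length ∧ (S.drop i).take P.length = P

/-- The set of starting positions of occurrences of `P` in `S`. -/
noncomputable def occ {α : Type*} (P S : List α) : Finset ℕ :=
  (Finset.range (S.length + 1)).filter (fun i => OccursAt P S i)

/-- Hamming distance between two (equal-length) strings. -/
noncomputable def hamming {α : Type*} (S T : List α) : ℕ :=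
  ((List.range S.length).filter (fun i => S[i]? ≠ T[i]?)).length

/-- `P` is `(τ,k)`-resilient in `S`. -/
def Resilient {α : Type*} (P S : List α) (τ k : ℕ) : Prop :=
  ∀ S' : List α, S'.length = S.length → hamming S S' ≤ k → τ ≤ (occ P S').card

/-- The fragment `S[x..y]` (inclusive). -/
def frag {α : Type*} (S : List α) (x y : ℕ) : List α := (S.drop x).take (y - x + 1)

/-- The fragment `S[x..y]` is a run of `S`. -/
def IsRun {α : Type*} (S : List α) (x y : ℕ) : Prop :=
  x ≤ y ∧ y < S.length ∧ 2 * minPeriod (frag S x y) ≤ y - x + 1 ∧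
  (0 < x → ¬ IsPeriodOf (frag S (x - 1) y) (minPeriod (frag S x y))) ∧
  (y + 1 < S.length → ¬ IsPeriodOf (frag S x (y + 1)) (minPeriod (frag S x y)))

/-- The greedy left-to-right pairing of consecutive overlapping intervals,
capped at budget `t`. -/
noncomputable def greedyPairsR : List (ℝ × ℝ) → ℕ → ℕ
  | _, 0 => 0
  | [], _ + 1 => 0
  | [_], _ + 1 => 0
  | I :: J :: rest, t + 1 =>
    if J.1 ≤ I.2 then 1 + greedyPairsR rest t
    else greedyPairsR (J :: rest) (t + 1)


lemma greedy_zero (M : List (ℝ × ℝ)) : greedyPairsR M 0 = 0 := by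
  cases M with
  | nil => simp [greedyPairsR]
  | cons a l => cases l <;> simp [greedyPairsR]

lemma greedy_le : ∀ (M : List (ℝ × ℝ)) (t : ℕ), greedyPairsR M t ≤ t
  | [], t => by cases t <;> simp [greedyPairsR]
  | [I], t => by cases t <;> simp [greedyPairsR]
  | I :: J :: rest, 0 => by simp [greedyPairsR]
  | I :: J :: rest, (t+1) => by
      by_cases h : J.1 ≤ I.2
      · simp only [greedyPairsR, if_pos h]
        have := greedy_le rest t; omega
      · simp only [greedyPairsR, if_neg h]
        exact greedy_le (J :: rest) (t+1)
  termination_by M t => M.length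

lemma greedy_mono : ∀ (M : List (ℝ × ℝ)) (t : ℕ), greedyPairsR M t ≤ greedyPairsR M (t+1)
  | [], t => by cases t <;> simp [greedyPairsR]
  | [I], t => by cases t <;> simp [greedyPairsR]
  | I :: J :: rest, 0 => by simp [greedy_zero]
  | I :: J :: rest, (t+1) => by
      by_cases h : J.1 ≤ I.2
      · simp only [greedyPairsR, if_pos h]
        have := greedy_mono rest t; omega
      · simp only [greedyPairsR, if_neg h]
        exact greedy_mono (J :: rest) (t+1)
  termination_by M t => M.length

lemma greedy_step : ∀ (M : List (ℝ × ℝ)) (t : ℕ), greedyPairsR M (t+1) ≤ greedyPairsR M t + 1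
  | [], t => by cases t <;> simp [greedyPairsR]
  | [I], t => by cases t <;> simp [greedyPairsR]
  | I :: J :: rest, 0 => by
      simp only [greedy_zero]
      have := greedy_le (I :: J :: rest) (0+1); omega
  | I :: J :: rest, (t+1) => by
      by_cases h : J.1 ≤ I.2
      · simp only [greedyPairsR, if_pos h]
        have := greedy_step rest t; omega
      · simp only [greedyPairsR, if_neg h]
        exact greedy_step (J :: rest) (t+1)
  termination_by M t => M.length

noncomputable def stab (M : List (ℝ × ℝ)) (Q : Finset ℝ) : ℕ :=
  (M.filter (fun I => ∃ q ∈ Q, I.1 ≤ q ∧ q ≤ I.2)).length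

lemma stab_nil (Q : Finset ℝ) : stab [] Q = 0 := rfl

lemma stab_cons (I : ℝ × ℝ) (M : List (ℝ × ℝ)) (Q : Finset ℝ) :
    stab (I :: M) Q = (if ∃ q ∈ Q, I.1 ≤ q ∧ q ≤ I.2 then 1 else 0) + stab M Q := by
  by_cases h : ∃ q ∈ Q, I.1 ≤ q ∧ q ≤ I.2 <;>
    simp [stab, List.filter_cons, h, Nat.add_comm]

lemma stab_le_length (M : List (ℝ × ℝ)) (Q : Finset ℝ) : stab M Q ≤ M.length :=
  List.length_filter_le _ _

lemma stab_empty (M : List (ℝ × ℝ)) : stab M (∅ : Finset ℝ) = 0 := by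
  simp [stab]

lemma stab_mono (M : List (ℝ × ℝ)) {Q Q' : Finset ℝ} (h : Q ⊆ Q') :
    stab M Q ≤ stab M Q' := by
  induction M with
  | nil => simp [stab_nil]
  | cons I M ih =>
    rw [stab_cons, stab_cons]
    have : (if ∃ q ∈ Q, I.1 ≤ q ∧ q ≤ I.2 then 1 else 0) ≤
        (if ∃ q ∈ Q', I.1 ≤ q ∧ q ≤ I.2 then 1 else 0) := by
      split_ifs with h1 h2 <;> try omega
      · exact absurd (h1.imp fun q ⟨hq, hs⟩ => ⟨h hq, hs⟩) h2
    omega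

lemma stab_erase_le (M : List (ℝ × ℝ)) (Q : Finset ℝ) (q : ℝ) :
    stab M Q ≤ stab M (Q.erase q) +
      (M.filter (fun K => K.1 ≤ q ∧ q ≤ K.2)).length := by
  induction M with
  | nil => simp [stab_nil]
  | cons I M ih =>
    rw [stab_cons, stab_cons, List.filter_cons]
    by_cases hq : I.1 ≤ q ∧ q ≤ I.2
    · have hd : decide (I.1 ≤ q ∧ q ≤ I.2) = true := by simp [hq]
      rw [hd, if_pos rfl, List.length_cons]
      split_ifs <;> omega
    · have h1 : (if ∃ p ∈ Q, I.1 ≤ p ∧ p ≤ I.2 then 1 else 0) ≤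
          (if ∃ p ∈ Q.erase q, I.1 ≤ p ∧ p ≤ I.2 then 1 else 0) := by
        split_ifs with ha hb <;> try omega
        obtain ⟨p, hp, hs⟩ := ha
        refine absurd ⟨p, Finset.mem_erase.mpr ⟨?_, hp⟩, hs⟩ hb
        rintro rfl; exact hq hs
      have hd : decide (I.1 ≤ q ∧ q ≤ I.2) = false := by simp [hq]
      rw [hd]
      simp only [Bool.false_eq_true, if_false]
      omega

lemma stab_erase_eq (M : List (ℝ × ℝ)) (Q : Finset ℝ) (q : ℝ)
    (h : ∀ K ∈ M, ¬(K.1 ≤ q ∧ q ≤ K.2)) :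
    stab M Q ≤ stab M (Q.erase q) := by
  have := stab_erase_le M Q q
  have h0 : (M.filter (fun K => K.1 ≤ q ∧ q ≤ K.2)).length = 0 := by
    rw [List.length_eq_zero_iff, List.filter_eq_nil_iff]
    intro K hK
    simpa using h K hK
  omega

lemma filter_stab_cons_length (I : ℝ × ℝ) (M : List (ℝ × ℝ)) (x : ℝ) :
    ((I :: M).filter (fun K => K.1 ≤ x ∧ x ≤ K.2)).length
      = (if I.1 ≤ x ∧ x ≤ I.2 then 1 else 0)
        + (M.filter (fun K => K.1 ≤ x ∧ x ≤ K.2)).length := by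
  by_cases h : I.1 ≤ x ∧ x ≤ I.2 <;> simp [List.filter_cons, h, Nat.add_comm]

lemma UB : ∀ (M : List (ℝ × ℝ)), M.Pairwise (fun I J => I.1 ≤ J.1) →
    (∀ x : ℝ, (M.filter (fun I => I.1 ≤ x ∧ x ≤ I.2)).length ≤ 2) →
    ∀ (t : ℕ) (Q : Finset ℝ), Q.card ≤ t → stab M Q ≤ greedyPairsR M t + t
  | [], _, _, t, Q, _ => by simp [stab_nil]
  | [I], _, _, t, Q, hQ => by
      rcases Nat.eq_zero_or_pos t with rfl | ht
      · have hQ0 : Q = ∅ := Finset.card_eq_zero.mp (Nat.le_zero.mp hQ)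
        subst hQ0; simp [stab_empty]
      · have := stab_le_length [I] Q; simp at this; omega
  | I :: J :: rest, hs, hthin, 0, Q, hQ => by
      have hQ0 : Q = ∅ := Finset.card_eq_zero.mp (Nat.le_zero.mp hQ)
      subst hQ0; simp [stab_empty, greedy_zero]
  | I :: J :: rest, hs, hthin, (t+1), Q, hQ => by
      have hsJ : (J :: rest).Pairwise (fun I J => I.1 ≤ J.1) := hs.of_cons
      have hsR : rest.Pairwise (fun I J => I.1 ≤ J.1) := hsJ.of_cons
      have hIJ1 : I.1 ≤ J.1 := (List.pairwise_cons.mp hs).1 J (by simp)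
      have hJK : ∀ K ∈ rest, J.1 ≤ K.1 := fun K hK => (List.pairwise_cons.mp hsJ).1 K hK
      have hthinJ : ∀ x : ℝ, ((J :: rest).filter (fun I => I.1 ≤ x ∧ x ≤ I.2)).length ≤ 2 := by
        intro x
        have h := hthin x
        rw [filter_stab_cons_length] at h
        omega
      have hthinR : ∀ x : ℝ, (rest.filter (fun I => I.1 ≤ x ∧ x ≤ I.2)).length ≤ 2 := by
        intro x
        have h := hthinJ x
        rw [filter_stab_cons_length] at h
        omega
      by_cases hov : J.1 ≤ I.2
      · -- greedy pairs I and J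
        have hg : greedyPairsR (I :: J :: rest) (t+1) = 1 + greedyPairsR rest t := by
          simp [greedyPairsR, hov]
        rw [hg]
        have hst : stab (I :: J :: rest) Q
            = (if ∃ q ∈ Q, I.1 ≤ q ∧ q ≤ I.2 then 1 else 0)
              + ((if ∃ q ∈ Q, J.1 ≤ q ∧ q ≤ J.2 then 1 else 0) + stab rest Q) := by
          rw [stab_cons, stab_cons]
        by_cases hcom : ∃ q ∈ Q, (I.1 ≤ q ∧ q ≤ I.2) ∧ (J.1 ≤ q ∧ q ≤ J.2)
        · obtain ⟨q, hqQ, hqI, hqJ⟩ := hcom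
          have h2 := hthin q
          rw [filter_stab_cons_length, filter_stab_cons_length, if_pos hqI, if_pos hqJ] at h2
          have h0 : rest.filter (fun K => decide (K.1 ≤ q ∧ q ≤ K.2)) = [] :=
            List.length_eq_zero_iff.mp (by omega)
          have hrest0 : ∀ K ∈ rest, ¬(K.1 ≤ q ∧ q ≤ K.2) := by
            intro K hK hcK
            have hmem : K ∈ rest.filter (fun K => decide (K.1 ≤ q ∧ q ≤ K.2)) :=
              List.mem_filter.mpr ⟨hK, by simp [hcK]⟩
            rw [h0] at hmem
            exact absurd hmem List.not_mem_nil
          have h3 : stab rest Q ≤ stab rest (Q.erase q) := stab_erase_eq rest Q q hrest0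
          have h4 : stab rest (Q.erase q) ≤ greedyPairsR rest t + t := by
            apply UB rest hsR hthinR t
            have := Finset.card_erase_of_mem hqQ
            omega
          rw [hst]
          split_ifs <;> omega
        · by_cases hI : ∃ q ∈ Q, I.1 ≤ q ∧ q ≤ I.2
          · by_cases hJ : ∃ q ∈ Q, J.1 ≤ q ∧ q ≤ J.2
            · -- both stabbed, no common stabber
              obtain ⟨q1, hq1Q, hq1I⟩ := hI
              obtain ⟨q2, hq2Q, hq2J⟩ := hJ
              have hq1J : ¬(J.1 ≤ q1 ∧ q1 ≤ J.2) := fun h => hcom ⟨q1, hq1Q, hq1I, h⟩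
              have hq2I : ¬(I.1 ≤ q2 ∧ q2 ≤ I.2) := fun h => hcom ⟨q2, hq2Q, h, hq2J⟩
              have hlt : q1 < J.1 := by
                by_contra hge
                push_neg at hge
                have hq1J2 : J.2 < q1 := by
                  by_contra h'
                  push_neg at h'
                  exact hq1J ⟨hge, h'⟩
                exact hq2I ⟨le_trans hIJ1 hq2J.1, le_trans (le_trans hq2J.2 hq1J2.le) hq1I.2⟩
              have hrest0 : ∀ K ∈ rest, ¬(K.1 ≤ q1 ∧ q1 ≤ K.2) := by
                intro K hK hcK
                exact absurd (le_trans (hJK K hK) hcK.1) (not_le.mpr hlt)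
              have h3 : stab rest Q ≤ stab rest (Q.erase q1) := stab_erase_eq rest Q q1 hrest0
              have h4 : stab rest (Q.erase q1) ≤ greedyPairsR rest t + t := by
                apply UB rest hsR hthinR t
                have := Finset.card_erase_of_mem hq1Q
                omega
              rw [hst]
              split_ifs <;> omega
            · -- only I stabbed
              obtain ⟨q, hqQ, hqI⟩ := hI
              have h2 := hthin q
              rw [filter_stab_cons_length, filter_stab_cons_length, if_pos hqI] at h2
              have h3 : stab rest Q ≤ stab rest (Q.erase q)
                  + (rest.filter (fun K => K.1 ≤ q ∧ q ≤ K.2)).length := stab_erase_le rest Q q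
              have h4 : stab rest (Q.erase q) ≤ greedyPairsR rest t + t := by
                apply UB rest hsR hthinR t
                have := Finset.card_erase_of_mem hqQ
                omega
              rw [hst, if_neg hJ]
              split_ifs <;> omega
          · by_cases hJ : ∃ q ∈ Q, J.1 ≤ q ∧ q ≤ J.2
            · -- only J stabbed
              obtain ⟨q, hqQ, hqJ⟩ := hJ
              have h2 := hthin q
              rw [filter_stab_cons_length, filter_stab_cons_length, if_pos hqJ] at h2
              have h3 : stab rest Q ≤ stab rest (Q.erase q)
                  + (rest.filter (fun K => K.1 ≤ q ∧ q ≤ K.2)).length := stab_erase_le rest Q q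
              have h4 : stab rest (Q.erase q) ≤ greedyPairsR rest t + t := by
                apply UB rest hsR hthinR t
                have := Finset.card_erase_of_mem hqQ
                omega
              rw [hst, if_neg hI]
              split_ifs <;> omega
            · -- neither stabbed
              have h3 : stab rest Q ≤ greedyPairsR rest (t+1) + (t+1) :=
                UB rest hsR hthinR (t+1) Q hQ
              have h4 := greedy_step rest t
              rw [hst, if_neg hI, if_neg hJ]
              omega
      · -- greedy skips I
        have hg : greedyPairsR (I :: J :: rest) (t+1) = greedyPairsR (J :: rest) (t+1) := by
          simp [greedyPairsR, hov]
        rw [hg]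
        have hst : stab (I :: J :: rest) Q
            = (if ∃ q ∈ Q, I.1 ≤ q ∧ q ≤ I.2 then 1 else 0) + stab (J :: rest) Q := stab_cons _ _ _
        by_cases hI : ∃ q ∈ Q, I.1 ≤ q ∧ q ≤ I.2
        · obtain ⟨q, hqQ, hqI⟩ := hI
          have hqlt : q < J.1 := lt_of_le_of_lt hqI.2 (not_le.mp hov)
          have hrest0 : ∀ K ∈ (J :: rest), ¬(K.1 ≤ q ∧ q ≤ K.2) := by
            intro K hK hcK
            rcases List.mem_cons.mp hK with rfl | hK'
            · exact absurd hcK.1 (not_le.mpr hqlt)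
            · exact absurd (le_trans (hJK K hK') hcK.1) (not_le.mpr hqlt)
          have h3 : stab (J :: rest) Q ≤ stab (J :: rest) (Q.erase q) :=
            stab_erase_eq _ Q q hrest0
          have h4 : stab (J :: rest) (Q.erase q) ≤ greedyPairsR (J :: rest) t + t := by
            apply UB (J :: rest) hsJ hthinJ t
            have := Finset.card_erase_of_mem hqQ
            omega
          have h5 := greedy_mono (J :: rest) t
          rw [hst]
          split_ifs <;> omega
        · have h3 : stab (J :: rest) Q ≤ greedyPairsR (J :: rest) (t+1) + (t+1) :=
            UB (J :: rest) hsJ hthinJ (t+1) Q hQ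
          rw [hst, if_neg hI]
          omega
  termination_by M _ _ t => M.length + t
lemma greedy_nil (t : ℕ) : greedyPairsR [] t = 0 := by cases t <;> simp [greedyPairsR]
lemma greedy_single (I : ℝ × ℝ) (t : ℕ) : greedyPairsR [I] t = 0 := by
  cases t <;> simp [greedyPairsR]

lemma LB : ∀ (M : List (ℝ × ℝ)), (∀ I ∈ M, I.1 ≤ I.2) →
    M.Pairwise (fun I J => I.1 ≤ J.1) →
    ∀ t : ℕ, ∃ Q : Finset ℝ, Q.card ≤ t ∧
      min M.length (greedyPairsR M t + t) ≤ stab M Q ∧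
      Q.card + greedyPairsR M t ≤ stab M Q
  | [], _, _, t => ⟨∅, by simp [stab_nil, greedy_nil]⟩
  | [I], hv, _, 0 => ⟨∅, by simp [stab_empty, greedy_zero]⟩
  | [I], hv, _, (t+1) => by
      refine ⟨{I.1}, by simp, ?_, ?_⟩
      · have h1 : stab [I] {I.1} = 1 := by
          rw [stab_cons, if_pos ⟨I.1, by simp, le_refl _, hv I (by simp)⟩, stab_nil]
        rw [h1, greedy_single]
        simp
      · have h1 : stab [I] {I.1} = 1 := by
          rw [stab_cons, if_pos ⟨I.1, by simp, le_refl _, hv I (by simp)⟩, stab_nil]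
        rw [h1, greedy_single]
        simp
  | I :: J :: rest, _, _, 0 => ⟨∅, by simp [stab_empty, greedy_zero]⟩
  | I :: J :: rest, hv, hs, (t+1) => by
      have hsJ : (J :: rest).Pairwise (fun I J => I.1 ≤ J.1) := hs.of_cons
      have hsR : rest.Pairwise (fun I J => I.1 ≤ J.1) := hsJ.of_cons
      have hIJ1 : I.1 ≤ J.1 := (List.pairwise_cons.mp hs).1 J (by simp)
      have hvJ : ∀ K ∈ (J :: rest), K.1 ≤ K.2 := fun K hK => hv K (by simp [hK])
      have hvR : ∀ K ∈ rest, K.1 ≤ K.2 := fun K hK => hvJ K (by simp [hK])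
      by_cases hov : J.1 ≤ I.2
      · have hg : greedyPairsR (I :: J :: rest) (t+1) = 1 + greedyPairsR rest t := by
          simp [greedyPairsR, hov]
        obtain ⟨Q', h1, h2, h3⟩ := LB rest hvR hsR t
        refine ⟨insert J.1 Q', ?_, ?_, ?_⟩
        · have := Finset.card_insert_le J.1 Q'
          omega
        all_goals {
          have hcard := Finset.card_insert_le J.1 Q'
          have hstI : ∃ q ∈ insert J.1 Q', I.1 ≤ q ∧ q ≤ I.2 :=
            ⟨J.1, Finset.mem_insert_self _ _, hIJ1, hov⟩
          have hstJ : ∃ q ∈ insert J.1 Q', J.1 ≤ q ∧ q ≤ J.2 :=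
            ⟨J.1, Finset.mem_insert_self _ _, le_refl _, hvJ J (by simp)⟩
          have hmono : stab rest Q' ≤ stab rest (insert J.1 Q') :=
            stab_mono rest (Finset.subset_insert _ _)
          rw [hg, stab_cons, stab_cons, if_pos hstI, if_pos hstJ]
          try simp only [List.length_cons]
          omega }
      · have hg : greedyPairsR (I :: J :: rest) (t+1) = greedyPairsR (J :: rest) (t+1) := by
          simp [greedyPairsR, hov]
        obtain ⟨Q₁, h1, h2, h3⟩ := LB (J :: rest) hvJ hsJ (t+1)
        by_cases hcard : Q₁.card ≤ t
        · refine ⟨insert I.1 Q₁, ?_, ?_, ?_⟩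
          · have := Finset.card_insert_le I.1 Q₁
            omega
          all_goals {
            have hcard2 := Finset.card_insert_le I.1 Q₁
            have hstI : ∃ q ∈ insert I.1 Q₁, I.1 ≤ q ∧ q ≤ I.2 :=
              ⟨I.1, Finset.mem_insert_self _ _, le_refl _, hv I (by simp)⟩
            have hmono : stab (J :: rest) Q₁ ≤ stab (J :: rest) (insert I.1 Q₁) :=
              stab_mono _ (Finset.subset_insert _ _)
            rw [hg, stab_cons, if_pos hstI]
            try simp only [List.length_cons] at h2 ⊢
            omega }
        · refine ⟨Q₁, h1, ?_, ?_⟩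
          all_goals {
            rw [hg, stab_cons]
            have hind : (0:ℕ) ≤ (if ∃ q ∈ Q₁, I.1 ≤ q ∧ q ≤ I.2 then 1 else 0) := Nat.zero_le _
            try simp only [List.length_cons] at h2 ⊢
            omega }
  termination_by M _ _ t => M.length + t

theorem stmt19 (L : List (ℝ × ℝ)) (hvalid : ∀ I ∈ L, I.1 ≤ I.2)
    (hsort : L.Pairwise (fun I J => I.1 ≤ J.1))
    (hthin : ∀ x : ℝ, (L.filter (fun I => I.1 ≤ x ∧ x ≤ I.2)).length ≤ 2)
    (t : ℕ) :
    IsGreatest {d : ℕ | ∃ Q : Finset ℝ, Q.card ≤ t ∧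
        d = (L.filter (fun I => ∃ q ∈ Q, I.1 ≤ q ∧ q ≤ I.2)).length}
      (min L.length (2 * greedyPairsR L t + (t - greedyPairsR L t))) := by
  have hg := greedy_le L t
  have hval : 2 * greedyPairsR L t + (t - greedyPairsR L t) = greedyPairsR L t + t := by
    omega
  obtain ⟨Q, hQc, hmin, -⟩ := LB L hvalid hsort t
  have hub : ∀ Q' : Finset ℝ, Q'.card ≤ t →
      stab L Q' ≤ min L.length (greedyPairsR L t + t) := fun Q' h =>
    le_min (stab_le_length L Q') (UB L hsort hthin t Q' h)
  constructor
  · refine ⟨Q, hQc, ?_⟩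
    have heq : stab L Q = min L.length (greedyPairsR L t + t) :=
      le_antisymm (hub Q hQc) hmin
    rw [hval]
    exact heq.symm
  · rintro d ⟨Q', hc, rfl⟩
    rw [hval]
    exact hub Q' hc
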